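/- If a forecast distribution function G is continuous and probabilistically calibrated for a real-valued random variable Y (i.e., P(G(Y) ≤ α) ≤ α ≤ P(G(Y−) < α) for all α ∈ (0,1)), then the probability integral transform G(Y) is uniformly distributed on [0,1]. -/

import Mathlib

open MeasureTheory

/-- If a continuous forecast distribution function `G` is probabilistically calibrated for
`Y`, then the probability integral transform `G(Y)` is uniformly distributed on `[0,1]`. -/
theorem stmt_0 {Ω : Type*} [MeasurableSpace Ω] (P : Measure Ω) [IsProbabilityMeasure P]
    (Y : Ω → ℝ) (hY : Measurable Y) (G : ℝ → ℝ)
    (hGcont : Continuous G) (hGmono : Monotone G)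
    (hGrange : ∀ y, G y ∈ Set.Icc (0 : ℝ) 1)
    (hcal : ∀ α ∈ Set.Ioo (0 : ℝ) 1,
      P {ω | G (Y ω) ≤ α} ≤ ENNReal.ofReal α ∧
      ENNReal.ofReal α ≤ P {ω | Function.leftLim G (Y ω) < α}) :
    Measure.map (fun ω => G (Y ω)) P = volume.restrict (Set.Icc (0 : ℝ) 1) := by
  have hL : ∀ y, Function.leftLim G y = G y := fun y =>
    leftLim_eq_of_tendsto
      ((hGcont.tendsto y).mono_left nhdsWithin_le_nhds)
  have hmeas : Measurable fun ω => G (Y ω) := hGcont.measurable.comp hY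
  -- CDF equality on (0,1)
  have heq : ∀ x ∈ Set.Ioo (0 : ℝ) 1, P {ω | G (Y ω) ≤ x} = ENNReal.ofReal x := by
    intro x hx
    obtain ⟨h1, h2⟩ := hcal x hx
    refine le_antisymm h1 (h2.trans (measure_mono ?_))
    intro ω hω
    simp only [Set.mem_setOf_eq, hL] at hω ⊢
    exact hω.le
  have h0 : P {ω | G (Y ω) ≤ 0} = 0 := by
    refine le_antisymm ?_ (zero_le)
    refine ENNReal.le_of_forall_pos_le_add fun ε hε _ => ?_
    have hα : min (ε : ℝ) (1/2) ∈ Set.Ioo (0 : ℝ) 1 :=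
      ⟨lt_min (by exact_mod_cast hε) (by norm_num), (min_le_right _ _).trans_lt (by norm_num)⟩
    calc P {ω | G (Y ω) ≤ 0} ≤ P {ω | G (Y ω) ≤ min (ε : ℝ) (1/2)} :=
          measure_mono fun ω hω => le_trans hω hα.1.le
      _ ≤ ENNReal.ofReal (min (ε : ℝ) (1/2)) := (hcal _ hα).1
      _ ≤ ENNReal.ofReal (ε : ℝ) := ENNReal.ofReal_le_ofReal (min_le_left _ _)
      _ = (ε : ENNReal) := ENNReal.ofReal_coe_nnreal
      _ ≤ 0 + ε := by simp
  refine Measure.ext_of_Iic _ _ fun x => ?_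
  rw [Measure.map_apply hmeas measurableSet_Iic,
    Measure.restrict_apply measurableSet_Iic]
  have hpre : (fun ω => G (Y ω)) ⁻¹' Set.Iic x = {ω | G (Y ω) ≤ x} := rfl
  rw [hpre]
  rcases lt_or_ge x 0 with hx | hx
  · have hs : {ω | G (Y ω) ≤ x} = ∅ := by
      ext ω; simp only [Set.mem_setOf_eq, Set.mem_empty_iff_false, iff_false, not_le]
      exact hx.trans_le (hGrange (Y ω)).1
    have ht : Set.Iic x ∩ Set.Icc (0:ℝ) 1 = ∅ := by
      ext a; simp only [Set.mem_inter_iff, Set.mem_Iic, Set.mem_Icc,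
        Set.mem_empty_iff_false, iff_false]
      rintro ⟨h1, h2, _⟩; linarith
    rw [hs, ht]; simp
  · rcases le_or_gt x 1 with hx1 | hx1
    · have ht : Set.Iic x ∩ Set.Icc (0:ℝ) 1 = Set.Icc 0 x := by
        ext a; simp only [Set.mem_inter_iff, Set.mem_Iic, Set.mem_Icc]
        constructor
        · rintro ⟨h1, h2, _⟩; exact ⟨h2, h1⟩
        · rintro ⟨h1, h2⟩; exact ⟨h2, h1, by linarith⟩
      rw [ht, Real.volume_Icc]
      rcases eq_or_lt_of_le hx with hx0 | hx0
      · subst hx0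
        rw [h0]; simp
      · rcases eq_or_lt_of_le hx1 with hx1' | hx1'
        · subst hx1'
          have hs : {ω | G (Y ω) ≤ (1:ℝ)} = Set.univ := by
            ext ω; simp [(hGrange (Y ω)).2]
          rw [hs, measure_univ]; norm_num
        · rw [heq x ⟨hx0, hx1'⟩]; norm_num
    · have ht : Set.Iic x ∩ Set.Icc (0:ℝ) 1 = Set.Icc 0 1 := by
        ext a; simp only [Set.mem_inter_iff, Set.mem_Iic, Set.mem_Icc]
        exact ⟨fun h => h.2, fun h => ⟨h.2.trans hx1.le, h⟩⟩
      have hs : {ω | G (Y ω) ≤ x} = Set.univ := by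
        ext ω; simp [le_trans (hGrange (Y ω)).2 hx1.le]
      rw [ht, hs, measure_univ, Real.volume_Icc]; norm_num
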